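/- Let V, W be finite-dimensional real inner product spaces and B_t : V → W a family of linear maps of the form B_t = B + tC (t ∈ ℝ) with rank B_t ≤ ℓ for all t. Suppose v, e₁, …, e_ℓ ∈ V satisfy Bv = 0, ⟨Be_j, Cv⟩ = 0 for all j, and Be₁, …, Be_ℓ are linearly independent. Then Cv = 0. -/

import Mathlib

open Module RealInnerProductSpace

theorem stmt_2 {V W : Type*} [NormedAddCommGroup V] [InnerProductSpace ℝ V]
    [FiniteDimensional ℝ V] [NormedAddCommGroup W] [InnerProductSpace ℝ W]
    [FiniteDimensional ℝ W]
    (B C : V →ₗ[ℝ] W) (ℓ : ℕ)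
    (hrank : ∀ t : ℝ, finrank ℝ (LinearMap.range (B + t • C)) ≤ ℓ)
    (v : V) (e : Fin ℓ → V)
    (hv : B v = 0)
    (horth : ∀ j, ⟪B (e j), C v⟫ = 0)
    (hli : LinearIndependent ℝ (fun j => B (e j))) :
    C v = 0 := by
  by_contra hCv
  set g : ℝ → Fin (ℓ+1) → W :=
    fun t => Fin.cons (C v) (fun j => B (e j) + t • C (e j)) with hg
  set M : ℝ → Matrix (Fin (ℓ+1)) (Fin (ℓ+1)) ℝ :=
    fun t => Matrix.of fun i j => ⟪g t i, g t j⟫ with hM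
  -- for t ≠ 0 the ℓ+1 vectors g t i all lie in range (B + t•C), of dim ≤ ℓ
  have hdet : ∀ t : ℝ, t ≠ 0 → (M t).det = 0 := by
    intro t ht
    have hmem : ∀ i, g t i ∈ LinearMap.range (B + t • C) := by
      intro i
      refine Fin.cases ?_ ?_ i
      · refine ⟨t⁻¹ • v, ?_⟩
        simp [hg, hv, smul_smul, inv_mul_cancel₀ ht]
      · intro j
        exact ⟨e j, by simp [hg]⟩
    have hnli : ¬ LinearIndependent ℝ (g t) := by
      intro hind
      have h1 : LinearIndependent ℝ
          (fun i => (⟨g t i, hmem i⟩ : LinearMap.range (B + t • C))) :=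
        LinearIndependent.of_comp (LinearMap.range (B + t • C)).subtype hind
      have h2 := h1.fintype_card_le_finrank
      simp only [Fintype.card_fin] at h2
      exact absurd (h2.trans (hrank t)) (by omega)
    obtain ⟨c, hsum, i₀, hi₀⟩ := Fintype.not_linearIndependent_iff.mp hnli
    refine Matrix.exists_mulVec_eq_zero_iff.mp ⟨c, ?_, ?_⟩
    · intro h; exact hi₀ (by rw [h]; rfl)
    · funext i
      have : ⟪g t i, ∑ j, c j • g t j⟫ = 0 := by rw [hsum]; simp
      rw [inner_sum] at this
      simpa [Matrix.mulVec, dotProduct, hM, real_inner_smul_right, mul_comm] using this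
  -- continuity: det (M t) = 0 for all t, in particular t = 0
  have hgc : ∀ i, Continuous fun t => g t i := by
    intro i
    refine Fin.cases ?_ ?_ i
    · simpa [hg] using (continuous_const : Continuous fun _ : ℝ => C v)
    · intro j
      simpa [hg] using
        (by fun_prop :
          Continuous fun t : ℝ => B (e j) + t • C (e j))
  have hcont : Continuous fun t => (M t).det := by
    refine Continuous.matrix_det (continuous_matrix fun i j => ?_)
    exact (hgc i).inner (hgc j)
  have hdet0 : (M 0).det = 0 := by
    have heq : (fun t => (M t).det) = fun _ => (0 : ℝ) := by
      refine Continuous.ext_on (dense_compl_singleton (0 : ℝ)) hcont continuous_const ?_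
      intro t ht
      exact hdet t ht
    exact congrFun heq 0
  -- extract a dependence relation for g 0
  obtain ⟨c, hc0, hcv⟩ := Matrix.exists_mulVec_eq_zero_iff.mpr hdet0
  have hinner : ∀ i, ⟪g 0 i, ∑ j, c j • g 0 j⟫ = 0 := by
    intro i
    have := congrFun hcv i
    simp only [Matrix.mulVec, dotProduct, hM, Matrix.of_apply, Pi.zero_apply] at this
    rw [inner_sum]
    simpa [real_inner_smul_right, mul_comm] using this
  have hs0 : (∑ j, c j • g 0 j) = 0 := by
    rw [← inner_self_eq_zero (𝕜 := ℝ), sum_inner]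
    simp [real_inner_smul_left, hinner]
  -- take inner products with C v to kill the first coefficient
  have hCv2 : ⟪C v, C v⟫ ≠ 0 := fun h => hCv (inner_self_eq_zero.mp h)
  have hgz : g 0 0 = C v := by simp [hg]
  have hgs : ∀ j : Fin ℓ, g 0 j.succ = B (e j) := by intro j; simp [hg]
  have hc00 : c 0 = 0 := by
    have h0 := hinner 0
    rw [hgz, inner_sum, Fin.sum_univ_succ] at h0
    simp only [hgz, hgs, real_inner_smul_right] at h0
    have : ∀ j : Fin ℓ, c j.succ * ⟪C v, B (e j)⟫ = 0 := by
      intro j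
      rw [real_inner_comm, horth j, mul_zero]
    rw [Finset.sum_congr rfl (fun j _ => this j), Finset.sum_const_zero, add_zero] at h0
    exact (mul_eq_zero.mp h0).resolve_right hCv2
  have htail : ∀ j : Fin ℓ, c j.succ = 0 := by
    have hsum' : ∑ j : Fin ℓ, c j.succ • B (e j) = 0 := by
      have := hs0
      rw [Fin.sum_univ_succ, hgz, hc00, zero_smul, zero_add] at this
      simpa [hgs] using this
    exact Fintype.linearIndependent_iff.mp hli _ hsum'
  apply hc0
  funext i
  refine Fin.cases ?_ ?_ i
  · exact hc00
  · exact htail
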